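/- Let nonnegative weights w_P on the pairs of an r-element set R have total weight w. Then either at least r/2 pairs P satisfy w_P ≥ w/r², or there exists S ⊆ R of size r-1 with Σ_{P⊆S} w_P ≥ (1 + 1/(4r·C(r,2)²))·(C(r-1,2)/C(r,2))·w. -/

import Mathlib

open Finset in
private lemma matching_discrepancy_arith (x : ℝ) (hx : 2 ≤ x) :
    (1 + 1 / (4 * x * (x * (x - 1) / 2) ^ 2)) * ((x - 1) * (x - 2) / 2 / (x * (x - 1) / 2))
      ≤ 1 - (x - 1) / x ^ 2 := by
  have hx0 : (0:ℝ) < x := by linarith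
  have hx1 : (0:ℝ) < x - 1 := by linarith
  have hx2 : (0:ℝ) ≤ x - 2 := by linarith
  rw [← sub_nonneg]
  have hkey : 1 - (x - 1) / x ^ 2 -
      (1 + 1 / (4 * x * (x * (x - 1) / 2) ^ 2)) * ((x - 1) * (x - 2) / 2 / (x * (x - 1) / 2))
      = ((x + 1) * x ^ 2 * (x - 1) ^ 2 - (x - 2)) / (x ^ 4 * (x - 1) ^ 2) := by
    field_simp
    ring
  rw [hkey]
  apply div_nonneg _ (by positivity)
  nlinarith [mul_nonneg (by linarith : (0:ℝ) ≤ x + 1) (by nlinarith : (0:ℝ) ≤ x ^ 2 - 4),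
    mul_nonneg (mul_nonneg (by linarith : (0:ℝ) ≤ x + 1) (sq_nonneg x))
      (by nlinarith : (0:ℝ) ≤ (x - 1) ^ 2 - 1)]


open Finset in
/-- Either at least `r/2` pairs have weight at least `w/r²`, or some `(r-1)`-set
has internal weight at least `(1 + 1/(4r·C(r,2)²))·(C(r-1,2)/C(r,2))·w`. -/
theorem matching_discrepancy (r : ℕ) (hr : 2 ≤ r)
    (w : Finset (Fin r) → ℝ) (hw : ∀ P, 0 ≤ w P)
    (W : ℝ)
    (hW : W = ∑ P ∈ powersetCard 2 (univ : Finset (Fin r)), w P) :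
    ((r : ℝ) / 2 ≤
      (((powersetCard 2 (univ : Finset (Fin r))).filter
        fun P => W / (r : ℝ) ^ 2 ≤ w P).card : ℝ)) ∨
    ∃ S ∈ powersetCard (r - 1) (univ : Finset (Fin r)),
      (1 + 1 / (4 * (r : ℝ) * (r.choose 2 : ℝ) ^ 2)) *
        (((r - 1).choose 2 : ℝ) / (r.choose 2 : ℝ)) * W ≤
      ∑ P ∈ powersetCard 2 S, w P := by
  set H := (powersetCard 2 (univ : Finset (Fin r))).filter
      fun P => W / (r : ℝ) ^ 2 ≤ w P with hH
  by_cases hbig : (r : ℝ) / 2 ≤ (H.card : ℝ)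
  · exact Or.inl hbig
  right
  push_neg at hbig
  have hW0 : 0 ≤ W := hW ▸ Finset.sum_nonneg fun P _ => hw P
  -- heavy pairs cover fewer than r vertices
  have hcovcard : (H.biUnion id).card < r := by
    have h1 : (H.biUnion id).card ≤ ∑ P ∈ H, P.card := Finset.card_biUnion_le
    have h2 : ∀ P ∈ H, P.card = 2 := by
      intro P hP
      have := Finset.mem_filter.1 hP
      exact (Finset.mem_powersetCard.1 this.1).2
    have h3 : ∑ P ∈ H, P.card = 2 * H.card := by
      rw [Finset.sum_congr rfl h2]
      simp [mul_comm]
    have h4 : (2 * H.card : ℝ) < r := by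
      have := hbig
      linarith [hbig]
    have h5 : 2 * H.card < r := by exact_mod_cast h4
    omega
  have hcovcard' : (H.biUnion id).card < (univ : Finset (Fin r)).card := by
    simpa using hcovcard
  have hne : ∃ v, v ∉ H.biUnion id := by
    by_contra h
    push_neg at h
    have heq : H.biUnion id = univ := Finset.eq_univ_iff_forall.2 h
    rw [heq] at hcovcard'
    exact lt_irrefl _ hcovcard'
  obtain ⟨v, hv⟩ := hne
  have hvH : ∀ P ∈ H, v ∉ P := by
    intro P hP hvP
    exact hv (Finset.mem_biUnion.2 ⟨P, hP, hvP⟩)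
  set S := (univ : Finset (Fin r)).erase v with hS
  have hScard : S.card = r - 1 := by
    rw [hS, Finset.card_erase_of_mem (Finset.mem_univ v)]
    simp
  refine ⟨S, Finset.mem_powersetCard.2 ⟨Finset.erase_subset _ _, hScard⟩, ?_⟩
  -- split the total weight
  set D := (powersetCard 2 (univ : Finset (Fin r))).filter (fun P => v ∈ P) with hD
  have hfilt : (powersetCard 2 (univ : Finset (Fin r))).filter (fun P => v ∉ P)
      = powersetCard 2 S := by
    ext P
    simp only [Finset.mem_filter, Finset.mem_powersetCard, hS, Finset.subset_erase]
    tauto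
  have hsplit : W = (∑ P ∈ D, w P) + ∑ P ∈ powersetCard 2 S, w P := by
    rw [hW, ← hfilt, hD]
    exact (Finset.sum_filter_add_sum_filter_not _ _ _).symm
  -- bound the degree of v
  have hwle : ∀ P ∈ D, w P ≤ W / (r : ℝ) ^ 2 := by
    intro P hP
    have hPm := Finset.mem_filter.1 hP
    by_contra hc
    push_neg at hc
    have hPH : P ∈ H := Finset.mem_filter.2 ⟨hPm.1, le_of_lt hc⟩
    exact hvH P hPH hPm.2
  have hDcard : D.card ≤ r - 1 := by
    have : D.card ≤ (powersetCard 1 S).card := by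
      apply Finset.card_le_card_of_injOn (fun P => P.erase v)
      · intro P hP
        have hPm := Finset.mem_filter.1 hP
        have hc2 := Finset.mem_powersetCard.1 hPm.1
        rw [Finset.mem_coe, Finset.mem_powersetCard]
        constructor
        · rw [hS, Finset.subset_erase]
          exact ⟨Finset.subset_univ _, Finset.notMem_erase _ _⟩
        · rw [Finset.card_erase_of_mem hPm.2, hc2.2]
      · intro P hP Q hQ hPQ
        have hPm := Finset.mem_filter.1 hP
        have hQm := Finset.mem_filter.1 hQ
        have : insert v (P.erase v) = insert v (Q.erase v) := congrArg (insert v) hPQ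
        rwa [Finset.insert_erase hPm.2, Finset.insert_erase hQm.2] at this
    rwa [Finset.card_powersetCard, hScard, Nat.choose_one_right] at this
  have hDsum : ∑ P ∈ D, w P ≤ ((r : ℝ) - 1) * (W / (r : ℝ) ^ 2) := by
    calc ∑ P ∈ D, w P ≤ ∑ _P ∈ D, W / (r : ℝ) ^ 2 := Finset.sum_le_sum hwle
      _ = (D.card : ℝ) * (W / (r : ℝ) ^ 2) := by rw [Finset.sum_const]; ring
      _ ≤ ((r : ℝ) - 1) * (W / (r : ℝ) ^ 2) := by
          apply mul_le_mul_of_nonneg_right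
          · have : (D.card : ℝ) ≤ ((r - 1 : ℕ) : ℝ) := by exact_mod_cast hDcard
            have h1 : ((r - 1 : ℕ) : ℝ) = (r : ℝ) - 1 := by
              have : (1 : ℕ) ≤ r := by omega
              push_cast [this]
              ring
            linarith [this, h1.le]
          · positivity
  -- arithmetic conclusion
  have hx : (2 : ℝ) ≤ (r : ℝ) := by exact_mod_cast hr
  have hc2 : (r.choose 2 : ℝ) = (r : ℝ) * ((r : ℝ) - 1) / 2 := by
    rw [Nat.cast_choose_two]
  have hc2' : ((r - 1).choose 2 : ℝ) = ((r : ℝ) - 1) * ((r : ℝ) - 2) / 2 := by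
    rw [Nat.cast_choose_two]
    have h1 : ((r - 1 : ℕ) : ℝ) = (r : ℝ) - 1 := by
      have : (1 : ℕ) ≤ r := by omega
      push_cast [this]; ring
    rw [h1]; ring
  set x := (r : ℝ) with hxdef
  have hx0 : 0 < x := by linarith
  have hx1 : 0 < x - 1 := by linarith
  have key : (1 + 1 / (4 * x * (x * (x - 1) / 2) ^ 2)) * ((x - 1) * (x - 2) / 2 / (x * (x - 1) / 2))
      ≤ 1 - (x - 1) / x ^ 2 := matching_discrepancy_arith x hx
  have hsum : W - ((x : ℝ) - 1) * (W / x ^ 2) ≤ ∑ P ∈ powersetCard 2 S, w P := by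
    have := hDsum
    linarith [hsplit, hDsum]
  calc (1 + 1 / (4 * x * (r.choose 2 : ℝ) ^ 2)) * (((r - 1).choose 2 : ℝ) / (r.choose 2 : ℝ)) * W
      = (1 + 1 / (4 * x * (x * (x - 1) / 2) ^ 2)) *
        ((x - 1) * (x - 2) / 2 / (x * (x - 1) / 2)) * W := by rw [hc2, hc2']
    _ ≤ (1 - (x - 1) / x ^ 2) * W := mul_le_mul_of_nonneg_right key hW0
    _ = W - (x - 1) * (W / x ^ 2) := by ring
    _ ≤ _ := hsum
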